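/- arXiv:2502.13850 — 2 statements merged into one kernel-verified Lean document; each statement's English description precedes it below -/
import Mathlib

section
/- (Theorem 2.) An incompatibility measure ψ : P* → ℝ^A satisfies 'same cost—same incompatibility', 'allocation of incompatibility', and 'anonymity' if and only if it coincides with the Shapley incompatibility measure: for every a ∈ A and p ∈ P*, ψ_a(p) = Σ_{S ⊆ A ∖ {a}} (|S|! (J − |S| − 1)! / J!) · (p_S − p_{S ∪ {a}}). -/
open Finset

variable {A : Type*} [Fintype A] [DecidableEq A]

/-- `p` restricted to nonempty subsets belongs to the set `P` of consistent collections. -/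
def memP (p : Finset A → ℝ) : Prop :=
  ∃ π : Finset A → ℝ, (∀ W, 0 ≤ π W) ∧ (∑ W : Finset A, π W = 1) ∧
    ∀ S : Finset A, S.Nonempty →
      p S = ∑ W ∈ Finset.univ.filter (fun W : Finset A => S ⊆ W), π W

/-- `p ∈ P*`: `p ∅ = 1` and the restriction of `p` to nonempty subsets lies in `P`. -/
def memPStar (p : Finset A → ℝ) : Prop :=
  p ∅ = 1 ∧ memP p

/-- The Shapley incompatibility measure:
`φ_a(p) = Σ_{S ⊆ A∖{a}} (|S|!(J−|S|−1)!/J!) (p_S − p_{S∪{a}})`. -/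
noncomputable def shapley (p : Finset A → ℝ) (a : A) : ℝ :=
  ∑ S ∈ ((Finset.univ : Finset A).erase a).powerset,
    ((S.card.factorial * (Fintype.card A - S.card - 1).factorial : ℝ) /
        (Fintype.card A).factorial) * (p S - p (insert a S))

/-- *Same cost—same incompatibility*. -/
def SameCost (ψ : (Finset A → ℝ) → A → ℝ) : Prop :=
  ∀ p p', memPStar p → memPStar p' → ∀ a : A,
    (∀ S ∈ ((Finset.univ : Finset A).erase a).powerset,
      p S - p (insert a S) = p' S - p' (insert a S)) →
    ψ p a = ψ p' a

/-- *Allocation of incompatibility*: `Σ_a ψ_a(p) = 1 − p_A`. -/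
def Allocation (ψ : (Finset A → ℝ) → A → ℝ) : Prop :=
  ∀ p, memPStar p → ∑ a : A, ψ p a = 1 - p Finset.univ

/-- *Anonymity*: `ψ_a(p^π) = ψ_{π(a)}(p)` where `p^π_S = p_{π(S)}`. -/
def Anonymity (ψ : (Finset A → ℝ) → A → ℝ) : Prop :=
  ∀ π : Equiv.Perm A, ∀ p, memPStar p → ∀ a : A,
    ψ (fun S => p (S.image π)) a = ψ p (π a)

lemma powerset_erase (a : A) :
    ((Finset.univ : Finset A).erase a).powerset = univ.filter (fun S => a ∉ S) := by
  ext S; simp [Finset.subset_erase]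

/-- marginal of a collection given by a measure -/
lemma marg_eq (μ : Finset A → ℝ) (p : Finset A → ℝ)
    (hp : ∀ S, p S = ∑ W ∈ univ.filter (fun W : Finset A => S ⊆ W), μ W)
    (a : A) (S : Finset A) :
    p S - p (insert a S) = ∑ W ∈ univ.filter (fun W : Finset A => S ⊆ W ∧ a ∉ W), μ W := by
  have h1 : p S = (∑ W ∈ univ.filter (fun W : Finset A => S ⊆ W ∧ a ∈ W), μ W)
      + ∑ W ∈ univ.filter (fun W : Finset A => S ⊆ W ∧ a ∉ W), μ W := by
    rw [hp S, ← Finset.sum_filter_add_sum_filter_not (univ.filter (fun W : Finset A => S ⊆ W))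
      (fun W => a ∈ W) μ, Finset.filter_filter, Finset.filter_filter]
  have h2 : p (insert a S) = ∑ W ∈ univ.filter (fun W : Finset A => S ⊆ W ∧ a ∈ W), μ W := by
    rw [hp (insert a S)]
    apply Finset.sum_congr _ (fun _ _ => rfl)
    ext W
    simp [Finset.insert_subset_iff, and_comm]
  rw [h1, h2]; ring

lemma shapley_congr (p p' : Finset A → ℝ) (a : A)
    (h : ∀ S ∈ ((Finset.univ : Finset A).erase a).powerset,
      p S - p (insert a S) = p' S - p' (insert a S)) :
    shapley p a = shapley p' a := by
  unfold shapley
  exact Finset.sum_congr rfl (fun S hS => by rw [h S hS])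

/-- reindexing a filtered sum by a permutation -/
lemma sum_perm_filter (π : Equiv.Perm A) (ν : Finset A → ℝ) (S : Finset A) :
    (∑ W ∈ univ.filter (fun W : Finset A => S.image π ⊆ W), ν W)
      = ∑ W ∈ univ.filter (fun W : Finset A => S ⊆ W), ν (W.image π) := by
  rw [Finset.sum_filter, Finset.sum_filter]
  refine (Fintype.sum_equiv (Equiv.finsetCongr π) _ _ (fun W => ?_)).symm
  simp [Finset.map_eq_image, Finset.image_subset_image_iff π.injective]

lemma memPStar_perm (π : Equiv.Perm A) (p : Finset A → ℝ) (hp : memPStar p) :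
    memPStar (fun S => p (S.image π)) := by
  obtain ⟨h0, μ, hnn, hsum, hS⟩ := hp
  refine ⟨by simpa using h0, fun W => μ (W.image π), fun W => hnn _, ?_, fun S hS' => ?_⟩
  · rw [← hsum]
    refine Fintype.sum_equiv (Equiv.finsetCongr π) _ _ (fun W => ?_)
    simp [Finset.map_eq_image]
  · simp only
    rw [hS (S.image π) (hS'.image π), sum_perm_filter]

lemma shapley_perm (π : Equiv.Perm A) (p : Finset A → ℝ) (a : A) :
    shapley (fun S => p (S.image π)) a = shapley p (π a) := by
  unfold shapley
  rw [powerset_erase, powerset_erase]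
  refine Finset.sum_nbij' (fun S => S.image π) (fun S => S.image π.symm) ?_ ?_ ?_ ?_ ?_
  · intro S hS
    simp only [mem_filter, mem_univ, true_and] at hS ⊢
    intro h; rw [Finset.mem_image] at h
    obtain ⟨b, hb, e⟩ := h; exact hS (π.injective e ▸ hb)
  · intro S hS
    simp only [mem_filter, mem_univ, true_and] at hS ⊢
    intro h; rw [Finset.mem_image] at h
    obtain ⟨b, hb, e⟩ := h
    exact hS (((Equiv.symm_apply_eq π).1 e) ▸ hb)
  · intro S _; simp [Finset.image_image]
  · intro S _; simp [Finset.image_image]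
  · intro S _
    dsimp only
    rw [Finset.card_image_of_injective _ π.injective, Finset.image_insert]

lemma coeff_eq (J t : ℕ) (hJ : 1 ≤ J) (ht : t ≤ J) :
    ((J - t : ℕ) : ℝ) * ((t.factorial * (J - t - 1).factorial : ℝ) / J.factorial)
      - (t : ℕ) * (((t - 1).factorial * (J - (t - 1) - 1).factorial : ℝ) / J.factorial)
    = (if t = 0 then 1 else 0) + (if t = J then (-1 : ℝ) else 0) := by
  have hf : (J.factorial : ℝ) ≠ 0 := by
    exact_mod_cast J.factorial_ne_zero
  rcases Nat.eq_zero_or_pos t with h0 | h0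
  · subst h0
    have e1 : J * (Nat.factorial 0 * (J - 0 - 1).factorial) = J.factorial := by
      rw [Nat.factorial_zero, one_mul]
      simpa using Nat.mul_factorial_pred (show J ≠ 0 by omega)
    rw [if_pos rfl, if_neg (by omega)]
    have : ((J - 0 : ℕ) : ℝ) * ((Nat.factorial 0 * (J - 0 - 1).factorial : ℝ) / J.factorial)
        = ((J * (Nat.factorial 0 * (J - 0 - 1).factorial) : ℕ) : ℝ) / J.factorial := by
      push_cast [Nat.sub_zero]; ring
    rw [this, e1, div_self hf]
    push_cast; ring
  · rcases eq_or_lt_of_le ht with hJt | hJt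
    · subst hJt
      have e2 : t * ((t - 1).factorial * (t - (t - 1) - 1).factorial) = t.factorial := by
        rw [show t - (t - 1) - 1 = 0 by omega, Nat.factorial_zero, mul_one]
        exact Nat.mul_factorial_pred h0.ne'
      rw [if_neg (by omega), if_pos rfl]
      have : (t : ℝ) * (((t - 1).factorial * (t - (t - 1) - 1).factorial : ℝ) / t.factorial)
          = ((t * ((t - 1).factorial * (t - (t - 1) - 1).factorial) : ℕ) : ℝ) / t.factorial := by
        push_cast; ring_nf
      rw [show ((t - t : ℕ) : ℝ) = 0 by norm_num, this, e2, div_self hf]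
      ring
    · have e1 : (J - t) * (t.factorial * (J - t - 1).factorial)
          = t.factorial * (J - t).factorial := by
        rw [← Nat.mul_factorial_pred (show J - t ≠ 0 by omega)]
        ring
      have e2 : t * ((t - 1).factorial * (J - (t - 1) - 1).factorial)
          = t.factorial * (J - t).factorial := by
        rw [show J - (t - 1) - 1 = J - t by omega, ← Nat.mul_factorial_pred h0.ne']
        ring
      rw [if_neg (by omega), if_neg (by omega)]
      have l1 : ((J - t : ℕ) : ℝ) * ((t.factorial * (J - t - 1).factorial : ℝ) / J.factorial)
          = (((J - t) * (t.factorial * (J - t - 1).factorial) : ℕ) : ℝ) / J.factorial := by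
        push_cast; ring_nf
      have l2 : (t : ℝ) * (((t - 1).factorial * (J - (t - 1) - 1).factorial : ℝ) / J.factorial)
          = ((t * ((t - 1).factorial * (J - (t - 1) - 1).factorial) : ℕ) : ℝ) / J.factorial := by
        push_cast; ring_nf
      rw [l1, l2, e1, e2]
      ring

lemma shapley_eff (hJ : 1 ≤ Fintype.card A) (p : Finset A → ℝ) :
    ∑ a : A, shapley p a = p ∅ - p Finset.univ := by
  classical
  set J := Fintype.card A with hJdef
  set c : ℕ → ℝ := fun s => (s.factorial * (J - s - 1).factorial : ℝ) / J.factorial with hc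
  have step1 : ∀ a : A, shapley p a
      = (∑ S ∈ univ.filter (fun S : Finset A => a ∉ S), c S.card * p S)
        - ∑ T ∈ univ.filter (fun T : Finset A => a ∈ T), c (T.card - 1) * p T := by
    intro a
    have h2 : (∑ S ∈ univ.filter (fun S : Finset A => a ∉ S), c S.card * p (insert a S))
        = ∑ T ∈ univ.filter (fun T : Finset A => a ∈ T), c (T.card - 1) * p T := by
      refine Finset.sum_nbij' (fun S => insert a S) (fun T => T.erase a) ?_ ?_ ?_ ?_ ?_
      · intro S hS; simp
      · intro T hT; simp
      · intro S hS
        simp only [mem_filter, mem_univ, true_and] at hS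
        exact Finset.erase_insert hS
      · intro T hT
        simp only [mem_filter, mem_univ, true_and] at hT
        exact Finset.insert_erase hT
      · intro S hS
        simp only [mem_filter, mem_univ, true_and] at hS
        rw [Finset.card_insert_of_notMem hS, Nat.add_sub_cancel]
    rw [← h2, shapley, powerset_erase, ← Finset.sum_sub_distrib]
    exact Finset.sum_congr rfl (fun S _ => by rw [hc]; ring)
  calc ∑ a : A, shapley p a
      = (∑ a : A, ∑ S ∈ univ.filter (fun S : Finset A => a ∉ S), c S.card * p S)
        - ∑ a : A, ∑ T ∈ univ.filter (fun T : Finset A => a ∈ T), c (T.card - 1) * p T := by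
        rw [← Finset.sum_sub_distrib]
        exact Finset.sum_congr rfl (fun a _ => step1 a)
    _ = (∑ S : Finset A, ((J - S.card : ℕ) : ℝ) * (c S.card * p S))
        - ∑ S : Finset A, ((S.card : ℕ) : ℝ) * (c (S.card - 1) * p S) := by
        congr 1
        · simp_rw [Finset.sum_filter]
          rw [Finset.sum_comm]
          refine Finset.sum_congr rfl (fun S _ => ?_)
          rw [← Finset.sum_filter, Finset.sum_const,
            show univ.filter (fun a : A => a ∉ S) = Sᶜ by ext x; simp,
            Finset.card_compl, nsmul_eq_mul]
        · simp_rw [Finset.sum_filter]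
          rw [Finset.sum_comm]
          refine Finset.sum_congr rfl (fun S _ => ?_)
          rw [← Finset.sum_filter, Finset.sum_const,
            show univ.filter (fun a : A => a ∈ S) = S by ext x; simp,
            nsmul_eq_mul]
    _ = ∑ S : Finset A, (((if S = ∅ then 1 else 0) : ℝ) * p S
          + ((if S = (univ : Finset A) then -1 else 0) : ℝ) * p S) := by
        rw [← Finset.sum_sub_distrib]
        refine Finset.sum_congr rfl (fun S _ => ?_)
        have h1 : ((J - S.card : ℕ) : ℝ) * c S.card - (S.card : ℕ) * c (S.card - 1)
            = (if S.card = 0 then 1 else 0) + (if S.card = J then (-1 : ℝ) else 0) :=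
          coeff_eq J S.card hJ (Finset.card_le_univ S)
        have h2 : ((J - S.card : ℕ) : ℝ) * (c S.card * p S)
              - (S.card : ℕ) * (c (S.card - 1) * p S)
            = ((if S.card = 0 then 1 else 0) + (if S.card = J then (-1 : ℝ) else 0)) * p S := by
          rw [← h1]; ring
        rw [h2]
        have e0 : (S.card = 0) ↔ (S = ∅) := Finset.card_eq_zero
        have eu : (S.card = J) ↔ (S = univ) := by
          rw [hJdef]; exact Finset.card_eq_iff_eq_univ S
        simp only [e0, eu]
        ring
    _ = p ∅ - p Finset.univ := by
        rw [Finset.sum_add_distrib]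
        have t1 : (∑ S : Finset A, ((if S = ∅ then 1 else 0) : ℝ) * p S) = p ∅ := by
          simp only [ite_mul, one_mul, zero_mul]
          rw [Finset.sum_ite_eq' univ (∅ : Finset A) p]
          simp
        have t2 : (∑ S : Finset A, ((if S = (univ : Finset A) then -1 else 0) : ℝ) * p S)
            = - p Finset.univ := by
          simp only [ite_mul, neg_mul, one_mul, zero_mul]
          rw [Finset.sum_ite_eq' univ (univ : Finset A) (fun S => -p S)]
          simp
        rw [t1, t2]
        ring

lemma memPStar_of (μ : Finset A → ℝ) (hnn : ∀ W, 0 ≤ μ W) (hsum : ∑ W : Finset A, μ W = 1)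
    (p : Finset A → ℝ) (hp : ∀ S, p S = ∑ W ∈ univ.filter (fun W : Finset A => S ⊆ W), μ W) :
    memPStar p := by
  refine ⟨?_, μ, hnn, hsum, fun S _ => hp S⟩
  rw [hp ∅, Finset.filter_true_of_mem (fun W _ => Finset.empty_subset W)]
  exact hsum

lemma key (hJ : 1 ≤ Fintype.card A) {ψ : (Finset A → ℝ) → A → ℝ}
    (hSC : SameCost ψ) (hAl : Allocation ψ) (hAn : Anonymity ψ) :
    ∀ n : ℕ, ∀ μ : Finset A → ℝ, (∀ W, 0 ≤ μ W) → (∑ W : Finset A, μ W = 1) →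
      (univ.filter (fun W : Finset A => W ≠ univ ∧ μ W ≠ 0)).card ≤ n →
      ∀ p : Finset A → ℝ,
        (∀ S, p S = ∑ W ∈ univ.filter (fun W : Finset A => S ⊆ W), μ W) →
      ∀ a : A, ψ p a = shapley p a := by
  intro n
  induction n using Nat.strong_induction_on with
  | _ n ih =>
  intro μ hnn hsum hcard p hp a
  classical
  set s := univ.filter (fun W : Finset A => W ≠ univ ∧ μ W ≠ 0) with hs
  set U := s.biUnion id with hU
  have hpstar : memPStar p := memPStar_of μ hnn hsum p hp
  -- Claim A: reduction for axioms in the union of the support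
  have claimA : ∀ b : A, b ∈ U → ψ p b = shapley p b := by
    intro b hb
    obtain ⟨W₁, hW₁s, hbW₁⟩ := Finset.mem_biUnion.1 hb
    have hbW₁' : b ∈ W₁ := hbW₁
    set T : ℝ := ∑ V ∈ univ.filter (fun V : Finset A => b ∈ V), μ V with hT
    set μ' : Finset A → ℝ :=
      fun W => if b ∈ W then (if W = univ then T else 0) else μ W with hμ'
    have hμ'in : ∀ W : Finset A, b ∈ W → μ' W = if W = univ then T else 0 := by
      intro W h; simp only [hμ', if_pos h]
    have hμ'out : ∀ W : Finset A, b ∉ W → μ' W = μ W := by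
      intro W h; simp only [hμ', if_neg h]
    have hnn' : ∀ W, 0 ≤ μ' W := by
      intro W
      by_cases h : b ∈ W
      · rw [hμ'in W h]
        split
        · exact Finset.sum_nonneg fun V _ => hnn V
        · exact le_refl 0
      · rw [hμ'out W h]; exact hnn W
    have hsum' : ∑ W : Finset A, μ' W = 1 := by
      rw [← hsum,
        ← Finset.sum_filter_add_sum_filter_not univ (fun W : Finset A => b ∈ W) μ',
        ← Finset.sum_filter_add_sum_filter_not univ (fun W : Finset A => b ∈ W) μ]
      congr 1
      · have hmemu : (univ : Finset A) ∈ univ.filter (fun W : Finset A => b ∈ W) := by simp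
        rw [Finset.sum_congr rfl (fun W hW => hμ'in W (Finset.mem_filter.1 hW).2),
          Finset.sum_ite_eq' _ (univ : Finset A) (fun _ => T), if_pos hmemu]
      · exact Finset.sum_congr rfl fun W hW => hμ'out W (Finset.mem_filter.1 hW).2
    set p' : Finset A → ℝ :=
      fun S => ∑ W ∈ univ.filter (fun W : Finset A => S ⊆ W), μ' W with hp'
    have hp'def : ∀ S, p' S = ∑ W ∈ univ.filter (fun W : Finset A => S ⊆ W), μ' W :=
      fun S => rfl
    have hmarg : ∀ S ∈ ((Finset.univ : Finset A).erase b).powerset,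
        p S - p (insert b S) = p' S - p' (insert b S) := by
      intro S _
      rw [marg_eq μ p hp b S, marg_eq μ' p' hp'def b S]
      exact Finset.sum_congr rfl fun W hW =>
        (hμ'out W (Finset.mem_filter.1 hW).2.2).symm
    have hsub : univ.filter (fun W : Finset A => W ≠ univ ∧ μ' W ≠ 0) ⊆ s.erase W₁ := by
      intro W hW
      rw [Finset.mem_filter] at hW
      obtain ⟨-, hWu, hWne⟩ := hW
      have hbW : b ∉ W := by
        intro hbW
        exact hWne (by rw [hμ'in W hbW, if_neg hWu])
      refine Finset.mem_erase.2 ⟨?_, Finset.mem_filter.2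
        ⟨Finset.mem_univ _, hWu, by rwa [hμ'out W hbW] at hWne⟩⟩
      rintro rfl; exact hbW hbW₁'
    have hspos : 1 ≤ s.card := Finset.card_pos.2 ⟨W₁, hW₁s⟩
    have hcard' : (univ.filter (fun W : Finset A => W ≠ univ ∧ μ' W ≠ 0)).card ≤ n - 1 := by
      have h1 := Finset.card_le_card hsub
      rw [Finset.card_erase_of_mem hW₁s] at h1
      omega
    have hn1 : n - 1 < n := by omega
    have hψeq := hSC p p' hpstar (memPStar_of μ' hnn' hsum' p' hp'def) b hmarg
    rw [hψeq, shapley_congr p p' b hmarg]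
    exact ih (n - 1) hn1 μ' hnn' hsum' hcard' p' hp'def b
  -- invariance of p under swaps of elements outside U
  have hzero : ∀ x y : A, x ∉ U → y ∉ U → ∀ V : Finset A,
      (x ∈ V ∨ y ∈ V) → V ≠ univ → μ V = 0 := by
    intro x y hx hy V hv hVu
    by_contra h
    have hVs : V ∈ s := Finset.mem_filter.2 ⟨Finset.mem_univ _, hVu, h⟩
    have hmem : ∀ z ∈ V, z ∈ U := fun z hz => Finset.mem_biUnion.2 ⟨V, hVs, hz⟩
    rcases hv with h' | h'
    · exact hx (hmem _ h')
    · exact hy (hmem _ h')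
  have hswap : ∀ x y : A, x ∉ U → y ∉ U →
      (fun S : Finset A => p (S.image (Equiv.swap x y))) = p := by
    intro x y hx hy
    funext S
    have hμinv : ∀ W : Finset A, μ (W.image (Equiv.swap x y)) = μ W := by
      intro W
      by_cases hxW : x ∈ W
      · by_cases hWu : W = univ
        · subst hWu
          rw [show (univ : Finset A).image (Equiv.swap x y) = univ from
            Finset.eq_univ_of_card _ (by
              rw [Finset.card_image_of_injective _ (Equiv.swap x y).injective, Finset.card_univ])]
        · rw [hzero x y hx hy W (Or.inl hxW) hWu,
            hzero x y hx hy (W.image (Equiv.swap x y))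
              (Or.inr (by
                have := Finset.mem_image_of_mem (Equiv.swap x y) hxW
                rwa [Equiv.swap_apply_left] at this))
              (by
                intro h
                apply hWu
                apply Finset.eq_univ_of_card
                rw [← Finset.card_image_of_injective W (Equiv.swap x y).injective, h,
                  Finset.card_univ])]
      · by_cases hyW : y ∈ W
        · by_cases hWu : W = univ
          · subst hWu
            rw [show (univ : Finset A).image (Equiv.swap x y) = univ from
              Finset.eq_univ_of_card _ (by
                rw [Finset.card_image_of_injective _ (Equiv.swap x y).injective,
                  Finset.card_univ])]
          · rw [hzero x y hx hy W (Or.inr hyW) hWu,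
              hzero x y hx hy (W.image (Equiv.swap x y))
                (Or.inl (by
                  have := Finset.mem_image_of_mem (Equiv.swap x y) hyW
                  rwa [Equiv.swap_apply_right] at this))
                (by
                  intro h
                  apply hWu
                  apply Finset.eq_univ_of_card
                  rw [← Finset.card_image_of_injective W (Equiv.swap x y).injective, h,
                    Finset.card_univ])]
        · have heqon : Set.EqOn (⇑(Equiv.swap x y)) id ↑W := fun z hz =>
            Equiv.swap_apply_of_ne_of_ne
              (fun e => hxW (by rw [e] at hz; exact Finset.mem_coe.1 hz))
              (fun e => hyW (by rw [e] at hz; exact Finset.mem_coe.1 hz))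
          rw [(Finset.image_congr heqon).trans Finset.image_id]
    rw [hp, hp S, sum_perm_filter]
    exact Finset.sum_congr rfl fun W _ => hμinv W
  have claimBψ : ∀ x, x ∉ U → ∀ y, y ∉ U → ψ p x = ψ p y := by
    intro x hx y hy
    have h := hAn (Equiv.swap x y) p hpstar x
    rw [hswap x y hx hy, Equiv.swap_apply_left] at h
    exact h
  have claimBs : ∀ x, x ∉ U → ∀ y, y ∉ U → shapley p x = shapley p y := by
    intro x hx y hy
    have h := shapley_perm (Equiv.swap x y) p x
    rw [hswap x y hx hy, Equiv.swap_apply_left] at h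
    exact h
  by_cases haU : a ∈ U
  · exact claimA a haU
  · have heff : ∑ x : A, ψ p x = ∑ x : A, shapley p x := by
      rw [hAl p hpstar, shapley_eff hJ p, hpstar.1]
    rw [← Finset.sum_filter_add_sum_filter_not univ (fun x : A => x ∈ U) (ψ p),
      ← Finset.sum_filter_add_sum_filter_not univ (fun x : A => x ∈ U) (shapley p)] at heff
    have hA' : ∑ x ∈ univ.filter (fun x : A => x ∈ U), ψ p x
        = ∑ x ∈ univ.filter (fun x : A => x ∈ U), shapley p x :=
      Finset.sum_congr rfl fun x hx => claimA x (Finset.mem_filter.1 hx).2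
    have hC : ∑ x ∈ univ.filter (fun x : A => ¬ x ∈ U), ψ p x
        = ∑ x ∈ univ.filter (fun x : A => ¬ x ∈ U), shapley p x := by linarith
    have h1 : ∑ x ∈ univ.filter (fun x : A => ¬ x ∈ U), ψ p x
        = ((univ.filter (fun x : A => ¬ x ∈ U)).card : ℝ) * ψ p a := by
      rw [Finset.sum_congr rfl (fun x hx => claimBψ x (Finset.mem_filter.1 hx).2 a haU),
        Finset.sum_const, nsmul_eq_mul]
    have h2 : ∑ x ∈ univ.filter (fun x : A => ¬ x ∈ U), shapley p x
        = ((univ.filter (fun x : A => ¬ x ∈ U)).card : ℝ) * shapley p a := by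
      rw [Finset.sum_congr rfl (fun x hx => claimBs x (Finset.mem_filter.1 hx).2 a haU),
        Finset.sum_const, nsmul_eq_mul]
    rw [h1, h2] at hC
    have hcardpos : 0 < (univ.filter (fun x : A => ¬ x ∈ U)).card :=
      Finset.card_pos.2 ⟨a, Finset.mem_filter.2 ⟨Finset.mem_univ a, haU⟩⟩
    exact mul_left_cancel₀ (by exact_mod_cast hcardpos.ne') hC

/-- Theorem 2: an incompatibility measure satisfies *same cost—same incompatibility*,
*allocation of incompatibility* and *anonymity* iff it coincides with the Shapley
incompatibility measure on `P*`. -/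
theorem theorem2 (hJ : 1 ≤ Fintype.card A) (ψ : (Finset A → ℝ) → A → ℝ) :
    (SameCost ψ ∧ Allocation ψ ∧ Anonymity ψ) ↔
      ∀ p, memPStar p → ∀ a : A, ψ p a = shapley p a := by
  
  constructor
  · rintro ⟨hSC, hAl, hAn⟩ p hp a
    obtain ⟨h0, μ, hnn, hsum, hS⟩ := hp
    have hp' : ∀ S, p S = ∑ W ∈ univ.filter (fun W : Finset A => S ⊆ W), μ W := by
      intro S
      rcases S.eq_empty_or_nonempty with rfl | hne
      · rw [h0, Finset.filter_true_of_mem (fun W _ => Finset.empty_subset W)]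
        exact hsum.symm
      · exact hS S hne
    exact key hJ hSC hAl hAn
      ((univ.filter (fun W : Finset A => W ≠ univ ∧ μ W ≠ 0)).card) μ hnn hsum le_rfl p hp' a
  · intro h
    refine ⟨?_, ?_, ?_⟩
    · intro p p' hp hp' a hdiff
      rw [h p hp a, h p' hp' a]
      exact shapley_congr p p' a hdiff
    · intro p hp
      calc ∑ a : A, ψ p a = ∑ a : A, shapley p a :=
            Finset.sum_congr rfl fun a _ => h p hp a
        _ = p ∅ - p Finset.univ := shapley_eff hJ p
        _ = 1 - p Finset.univ := by rw [hp.1]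
    · intro π p hp a
      rw [h p hp (π a), h _ (memPStar_perm π p hp) a]
      exact shapley_perm π p a
end

section
/- (Proposition 1.) For every a ∈ A and every p ∈ P*, the Shapley incompatibility measure satisfies φ_a(p) = Σ_{S ⊆ A with a ∉ S} ( Σ_{T : S ⊆ T ⊆ A} (−1)^{|T ∖ S|} p_T ) / |A ∖ S|; that is, φ_a(p) = Σ_{S ⊆ A : a ∉ S} α*^p_S / |A ∖ S|. -/
open Finset

variable {A : Type*} [Fintype A] [DecidableEq A]

/-- The Möbius transform `α*^p_S = Σ_{T ⊇ S} (−1)^{|T ∖ S|} p_T` (defined for all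
`S ⊆ A`, including `S = ∅`). -/
def alphaStar (p : Finset A → ℝ) (S : Finset A) : ℝ :=
  ∑ T ∈ Finset.univ.filter (fun T : Finset A => S ⊆ T), (-1 : ℝ) ^ (T \ S).card * p T

lemma key_s17 : ∀ (t : ℕ) (J : ℕ), t < J →
    ∑ k ∈ Finset.range (t+1), (t.choose k : ℝ) * (-1)^(t+k) / ((J:ℝ) - k)
      = (t.factorial * (J-t-1).factorial : ℝ) / (J.factorial) := by
  intro t
  induction t with
  | zero =>
    intro J hJ
    obtain ⟨m, rfl⟩ := Nat.exists_eq_succ_of_ne_zero (by omega : J ≠ 0)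
    have h1 : ((m:ℝ)+1) ≠ 0 := by positivity
    have h2 : ((m.factorial:ℝ)) ≠ 0 := by positivity
    simp [Nat.factorial_succ]
    field_simp
  | succ t ih =>
    intro J hJ
    have h1 := ih (J-1) (by omega)
    have h2 := ih J (by omega)
    have hc1 : ((J-1:ℕ):ℝ) = (J:ℝ) - 1 := by
      have : 1 ≤ J := by omega
      push_cast [this]; ring
    rw [hc1] at h1
    set g : ℕ → ℝ := fun j => (t.choose j : ℝ) * (-1)^(t+j) / ((J:ℝ) - j) with hg
    -- split LHS
    rw [Finset.sum_range_succ']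
    push_cast
    have e1 : ∀ k ∈ Finset.range (t+1),
        ((t+1).choose (k+1) : ℝ) * (-1)^(t+1+(k+1)) / ((J:ℝ) - ((k:ℝ)+1))
        = (t.choose k : ℝ) * (-1)^(t+k) / ((J:ℝ) - 1 - k)
          + (-(g (k+1))) := by
      intro k _
      rw [Nat.choose_succ_succ, hg]
      push_cast
      have hs1 : (-1:ℝ)^(t+1+(k+1)) = (-1)^(t+k) := by
        rw [show t+1+(k+1) = (t+k)+2 by ring, pow_add]; norm_num
      have hs2 : (-1:ℝ)^(t+(k+1)) = -(-1)^(t+k) := by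
        rw [show t+(k+1) = (t+k)+1 by ring, pow_succ]; ring
      rw [hs1, hs2]
      have hd : (J:ℝ) - ((k:ℝ)+1) = (J:ℝ) - 1 - k := by ring
      rw [hd]
      ring
    rw [Finset.sum_congr rfl e1, Finset.sum_add_distrib]
    have c0 : ((t+1).choose 0 : ℝ) * (-1)^(t+1+0) / ((J:ℝ) - (0:ℝ)) = -(g 0) := by
      simp [hg, pow_succ]; ring
    have hsum : (∑ k ∈ Finset.range (t+1), g (k+1)) + g 0 = ∑ k ∈ Finset.range (t+1), g k := by
      rw [← Finset.sum_range_succ', Finset.sum_range_succ]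
      simp [hg]
    have hsumg : ∑ k ∈ Finset.range (t+1), g k
        = (t.factorial * (J-t-1).factorial : ℝ) / (J.factorial) := h2
    have e2 : (∑ k ∈ Finset.range (t+1), -(g (k+1)))
        + ((t+1).choose 0 : ℝ) * (-1)^(t+1+0) / ((J:ℝ) - (0:ℝ))
        = -((t.factorial * (J-t-1).factorial : ℝ) / (J.factorial)) := by
      rw [c0, Finset.sum_neg_distrib, ← neg_add, hsum, hsumg]
    rw [add_assoc, e2, h1]
    -- final factorial arithmetic
    obtain ⟨u, rfl⟩ : ∃ u, J = t+2+u := ⟨J - (t+2), by omega⟩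
    have r1 : t+2+u-t-1 = u + 1 := by omega
    have r2 : t+2+u-1-t-1 = u := by omega
    have r3 : t+2+u-(t+1)-1 = u := by omega
    rw [r1, r2, r3]
    have hfJ : ((t+2+u).factorial : ℝ) = ((t+2+u:ℕ):ℝ) * ((t+1+u).factorial : ℝ) := by
      rw [show t+2+u = (t+1+u)+1 by ring, Nat.factorial_succ]; push_cast; ring
    have hne1 : ((t+1+u).factorial : ℝ) ≠ 0 := by positivity
    have hne2 : ((t+2+u:ℕ):ℝ) ≠ 0 := by positivity
    have hne3 : ((t.factorial : ℝ)) ≠ 0 := by positivity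
    rw [show t+2+u-1 = t+1+u by omega, hfJ]
    rw [Nat.factorial_succ t, Nat.factorial_succ u]
    push_cast
    field_simp
    ring


lemma hpow : ∀ (t k : ℕ), k ≤ t → (-1:ℝ)^(t-k) = (-1)^(t+k) := by
  intro t k hk
  rw [show t+k = (t-k) + 2*k by omega, pow_add, pow_mul]
  norm_num

lemma huniv_card (S : Finset A) :
    (((Finset.univ : Finset A) \ S).card : ℝ) = (Fintype.card A : ℝ) - S.card := by
  rw [Finset.card_sdiff_of_subset (Finset.subset_univ S), Finset.card_univ]
  have : S.card ≤ Fintype.card A := by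
    simpa using Finset.card_le_card (Finset.subset_univ S)
  push_cast [this]
  ring

lemma inner_notMem (p : Finset A → ℝ) (a : A) (T : Finset A) (haT : a ∉ T) :
    ∑ S ∈ T.powerset, (-1:ℝ)^((T \ S).card) * p T / (((Finset.univ : Finset A) \ S).card : ℝ)
    = ((T.card.factorial * (Fintype.card A - T.card - 1).factorial : ℝ) /
        (Fintype.card A).factorial) * p T := by
  set J := Fintype.card A with hJ
  have hTlt : T.card < J := by
    have : T ⊂ Finset.univ := Finset.ssubset_univ_iff.mpr (by
      intro h; exact haT (h ▸ Finset.mem_univ a))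
    simpa [hJ, Finset.card_univ] using Finset.card_lt_card this
  have h1 : ∀ S ∈ T.powerset,
      (-1:ℝ)^((T \ S).card) * p T / (((Finset.univ : Finset A) \ S).card : ℝ)
      = (fun k => (-1:ℝ)^(T.card + k) / ((J:ℝ) - k) * p T) S.card := by
    intro S hS
    rw [Finset.mem_powerset] at hS
    rw [Finset.card_sdiff_of_subset hS, hpow _ _ (Finset.card_le_card hS), huniv_card]
    ring
  rw [Finset.sum_congr rfl h1,
    Finset.sum_powerset_apply_card (fun k => (-1:ℝ)^(T.card + k) / ((J:ℝ) - k) * p T)]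
  have h2 : ∀ k ∈ Finset.range (T.card + 1),
      (T.card.choose k) • ((-1:ℝ)^(T.card + k) / ((J:ℝ) - k) * p T)
      = ((T.card.choose k : ℝ) * (-1)^(T.card + k) / ((J:ℝ) - k)) * p T := by
    intro k _; rw [nsmul_eq_mul]; ring
  rw [Finset.sum_congr rfl h2, ← Finset.sum_mul, key_s17 T.card J hTlt]

lemma inner_mem (p : Finset A → ℝ) (a : A) (T : Finset A) (haT : a ∈ T) :
    ∑ S ∈ (T.erase a).powerset,
        (-1:ℝ)^((T \ S).card) * p T / (((Finset.univ : Finset A) \ S).card : ℝ)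
    = -(((T.erase a).card.factorial *
          (Fintype.card A - (T.erase a).card - 1).factorial : ℝ) /
        (Fintype.card A).factorial) * p T := by
  set J := Fintype.card A with hJ
  set t' := (T.erase a).card with ht'
  have hTcard : t' + 1 = T.card := Finset.card_erase_add_one haT
  have hTJ : T.card ≤ J := by
    simpa [hJ, Finset.card_univ] using Finset.card_le_card (Finset.subset_univ T)
  have ht'lt : t' < J := by omega
  have h1 : ∀ S ∈ (T.erase a).powerset,
      (-1:ℝ)^((T \ S).card) * p T / (((Finset.univ : Finset A) \ S).card : ℝ)
      = (fun k => -((-1:ℝ)^(t' + k) / ((J:ℝ) - k) * p T)) S.card := by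
    intro S hS
    rw [Finset.mem_powerset] at hS
    have hST : S ⊆ T := hS.trans (Finset.erase_subset a T)
    have hSc : S.card ≤ t' := Finset.card_le_card hS
    have hc : (T \ S).card = (t' - S.card) + 1 := by
      rw [Finset.card_sdiff_of_subset hST]
      omega
    rw [hc, pow_succ, hpow _ _ hSc, huniv_card]
    ring
  rw [Finset.sum_congr rfl h1,
    Finset.sum_powerset_apply_card (fun k => -((-1:ℝ)^(t' + k) / ((J:ℝ) - k) * p T))]
  have h2 : ∀ k ∈ Finset.range (t' + 1),
      (t'.choose k) • (-((-1:ℝ)^(t' + k) / ((J:ℝ) - k) * p T))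
      = -(((t'.choose k : ℝ) * (-1)^(t' + k) / ((J:ℝ) - k)) * p T) := by
    intro k _; rw [nsmul_eq_mul]; ring
  rw [Finset.sum_congr rfl h2, Finset.sum_neg_distrib, ← Finset.sum_mul,
    key_s17 t' J ht'lt]
  ring

/-- Proposition 1: for `p ∈ P*` and `a ∈ A`,
`φ_a(p) = Σ_{S ⊆ A, a ∉ S} α*^p_S / |A ∖ S|`. -/
theorem proposition1 (hJ : 1 ≤ Fintype.card A)
    (a : A) (p : Finset A → ℝ) (hp : memPStar p) :
    shapley p a =
      ∑ S ∈ Finset.univ.filter (fun S : Finset A => a ∉ S),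
        alphaStar p S / ((Finset.univ \ S).card : ℝ) := by
  classical
  -- rewrite RHS as a double sum and swap
  have h1 : ∀ S ∈ Finset.univ.filter (fun S : Finset A => a ∉ S),
      alphaStar p S / ((Finset.univ \ S).card : ℝ)
      = ∑ T ∈ Finset.univ.filter (fun T : Finset A => S ⊆ T),
          (-1:ℝ)^((T \ S).card) * p T / ((Finset.univ \ S).card : ℝ) := by
    intro S _
    rw [alphaStar, Finset.sum_div]
  rw [Finset.sum_congr rfl h1]
  rw [Finset.sum_comm' (t' := (Finset.univ : Finset (Finset A)))
    (s' := fun T => Finset.univ.filter (fun S : Finset A => a ∉ S ∧ S ⊆ T))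
    (by intro S T; simp; try tauto)]
  have h2 : ∀ T ∈ (Finset.univ : Finset (Finset A)),
      (∑ S ∈ Finset.univ.filter (fun S : Finset A => a ∉ S ∧ S ⊆ T),
        (-1:ℝ)^((T \ S).card) * p T / ((Finset.univ \ S).card : ℝ))
      = ∑ S ∈ (T.erase a).powerset,
        (-1:ℝ)^((T \ S).card) * p T / ((Finset.univ \ S).card : ℝ) := by
    intro T _
    apply Finset.sum_congr _ (fun _ _ => rfl)
    ext S
    simp [Finset.subset_erase, and_comm]
  rw [Finset.sum_congr rfl h2]
  -- split according to whether a ∈ T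
  rw [← Finset.sum_filter_add_sum_filter_not Finset.univ (fun T : Finset A => a ∈ T)]
  -- the part with a ∈ T
  have h3 : ∀ T ∈ Finset.univ.filter (fun T : Finset A => a ∈ T),
      (∑ S ∈ (T.erase a).powerset,
        (-1:ℝ)^((T \ S).card) * p T / ((Finset.univ \ S).card : ℝ))
      = -(((T.erase a).card.factorial *
            (Fintype.card A - (T.erase a).card - 1).factorial : ℝ) /
          (Fintype.card A).factorial) * p T := by
    intro T hT
    exact inner_mem p a T (by simpa using hT)
  -- the part with a ∉ T
  have h4 : ∀ T ∈ Finset.univ.filter (fun T : Finset A => a ∉ T),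
      (∑ S ∈ (T.erase a).powerset,
        (-1:ℝ)^((T \ S).card) * p T / ((Finset.univ \ S).card : ℝ))
      = ((T.card.factorial * (Fintype.card A - T.card - 1).factorial : ℝ) /
          (Fintype.card A).factorial) * p T := by
    intro T hT
    have haT : a ∉ T := by simpa using hT
    rw [Finset.erase_eq_of_notMem haT]
    exact inner_notMem p a T haT
  rw [Finset.sum_congr rfl h3, Finset.sum_congr rfl h4]
  -- reindex the a ∈ T part by S = T.erase a
  have h5 : ∑ T ∈ Finset.univ.filter (fun T : Finset A => a ∈ T),
      -(((T.erase a).card.factorial *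
            (Fintype.card A - (T.erase a).card - 1).factorial : ℝ) /
          (Fintype.card A).factorial) * p T
      = ∑ S ∈ ((Finset.univ : Finset A).erase a).powerset,
        -((S.card.factorial * (Fintype.card A - S.card - 1).factorial : ℝ) /
          (Fintype.card A).factorial) * p (insert a S) := by
    apply Finset.sum_nbij' (fun T => T.erase a) (fun S => insert a S)
    · intro T hT
      simp only [Finset.mem_filter, Finset.mem_univ, true_and] at hT
      simp [Finset.mem_powerset, Finset.erase_subset_erase, Finset.subset_univ]
    · intro S hS
      simp only [Finset.mem_powerset, Finset.subset_erase] at hS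
      simp
    · intro T hT
      simp only [Finset.mem_filter, Finset.mem_univ, true_and] at hT
      exact Finset.insert_erase hT
    · intro S hS
      simp only [Finset.mem_powerset, Finset.subset_erase] at hS
      exact Finset.erase_insert hS.2
    · intro T hT
      simp only [Finset.mem_filter, Finset.mem_univ, true_and] at hT
      rw [Finset.insert_erase hT]
  -- identify the a ∉ T index set with the powerset of univ.erase a
  have h6 : Finset.univ.filter (fun T : Finset A => a ∉ T)
      = ((Finset.univ : Finset A).erase a).powerset := by
    ext T
    simp [Finset.subset_erase, Finset.subset_univ]
  rw [h5, h6]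
  -- finish
  rw [shapley, ← Finset.sum_add_distrib]
  apply Finset.sum_congr rfl
  intro S _
  ring
end
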